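/- Let (β_k) be a strictly positive null sequence of reals and T : c₀ → c₀ given by T a = Σ_k β_k a_k e_k. Then T is completely quasi Levi but not σ-Levi. -/

import Mathlib

/-- Order convergence of a net. -/
def OConvNet {ι F : Type*} [Preorder ι] [Lattice F] [AddCommGroup F]
    (x : ι → F) (x₀ : F) : Prop :=
  ∃ D : Set F, D.Nonempty ∧ DirectedOn (· ≥ ·) D ∧ IsGLB D 0 ∧
    ∀ y ∈ D, ∃ α₀, ∀ α, α₀ ≤ α → |x α - x₀| ≤ y

/-- Order convergence of a sequence. -/
def OConvSeq {F : Type*} [Lattice F] [AddCommGroup F] (x : ℕ → F) (x₀ : F) : Prop :=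
  ∃ y : ℕ → F, Antitone y ∧ IsGLB (Set.range y) 0 ∧
    ∀ m, ∃ n₀, ∀ n, n₀ ≤ n → |x n - x₀| ≤ y m

/-- A net is order-Cauchy if its double net of differences order converges to `0`. -/
def OCauchyNet {ι F : Type*} [Preorder ι] [Lattice F] [AddCommGroup F]
    (x : ι → F) : Prop :=
  OConvNet (fun p : ι × ι => x p.1 - x p.2) (0 : F)

/-- A sequence is order-Cauchy if its double sequence of differences order converges to `0`. -/
def OCauchySeq' {F : Type*} [Lattice F] [AddCommGroup F] (x : ℕ → F) : Prop :=
  OConvNet (fun p : ℕ × ℕ => x p.1 - x p.2) (0 : F)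

section Maps
variable {E F : Type*} [Lattice E] [AddCommGroup E] [Norm E] [Lattice F] [AddCommGroup F]

def IsLeviMap (T : E → F) : Prop :=
  ∀ (ι : Type) [Nonempty ι] [Preorder ι] [IsDirected ι (· ≤ ·)],
    ∀ x : ι → E, Monotone x → (∃ C, ∀ α, ‖x α‖ ≤ C) →
      ∃ x₀ : E, OConvNet (fun α => T (x α)) (T x₀)

def IsSigmaLeviMap (T : E → F) : Prop :=
  ∀ x : ℕ → E, Monotone x → (∃ C, ∀ n, ‖x n‖ ≤ C) →
    ∃ x₀ : E, OConvSeq (fun n => T (x n)) (T x₀)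

def IsCqLeviMap (T : E → F) : Prop :=
  ∀ (ι : Type) [Nonempty ι] [Preorder ι] [IsDirected ι (· ≤ ·)],
    ∀ x : ι → E, Monotone x → (∃ C, ∀ α, ‖x α‖ ≤ C) →
      ∃ y₀ : F, OConvNet (fun α => T (x α)) y₀

def IsCqSigmaLeviMap (T : E → F) : Prop :=
  ∀ x : ℕ → E, Monotone x → (∃ C, ∀ n, ‖x n‖ ≤ C) →
    ∃ y₀ : F, OConvSeq (fun n => T (x n)) y₀

def IsQLeviMap (T : E → F) : Prop :=
  ∀ (ι : Type) [Nonempty ι] [Preorder ι] [IsDirected ι (· ≤ ·)],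
    ∀ x : ι → E, Monotone x → (∃ C, ∀ α, ‖x α‖ ≤ C) →
      OCauchyNet (fun α => T (x α))

def IsQSigmaLeviMap (T : E → F) : Prop :=
  ∀ x : ℕ → E, Monotone x → (∃ C, ∀ n, ‖x n‖ ≤ C) →
    OCauchySeq' (fun n => T (x n))

end Maps

open Filter Topology

/-- The subspace `c` of convergent real sequences. -/
def cSub : Submodule ℝ (ℕ → ℝ) where
  carrier := {x | ∃ l : ℝ, Tendsto x atTop (nhds l)}
  add_mem' := by rintro x y ⟨l, hl⟩ ⟨m, hm⟩; exact ⟨l + m, hl.add hm⟩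
  zero_mem' := ⟨0, tendsto_const_nhds⟩
  smul_mem' := by rintro c x ⟨l, hl⟩; exact ⟨c * l, hl.const_mul c⟩

/-- The subspace `c₀` of real null sequences. -/
def c0Sub : Submodule ℝ (ℕ → ℝ) where
  carrier := {x | Tendsto x atTop (nhds 0)}
  add_mem' := by
    intro x y hx hy; show Tendsto (fun i => x i + y i) atTop (nhds 0); simpa using hx.add hy
  zero_mem' := tendsto_const_nhds
  smul_mem' := by
    intro c x hx; show Tendsto (fun i => c * x i) atTop (nhds 0); simpa using hx.const_mul c

/-- The subspace `ℓ^∞` of bounded real sequences. -/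
def LinfSub : Submodule ℝ (ℕ → ℝ) where
  carrier := {x | ∃ C : ℝ, ∀ n, |x n| ≤ C}
  add_mem' := by
    rintro x y ⟨C, hC⟩ ⟨D, hD⟩
    exact ⟨C + D, fun n => (abs_add_le _ _).trans (add_le_add (hC n) (hD n))⟩
  zero_mem' := ⟨0, fun n => by simp⟩
  smul_mem' := by
    rintro c x ⟨C, hC⟩
    exact ⟨|c| * C, fun n => by
      simpa [abs_mul] using mul_le_mul_of_nonneg_left (hC n) (abs_nonneg c)⟩

instance : Lattice cSub :=
  { (inferInstance : PartialOrder cSub) with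
    sup := fun x y => ⟨x.1 ⊔ y.1, by
      obtain ⟨l, hl⟩ := x.2; obtain ⟨m, hm⟩ := y.2; exact ⟨l ⊔ m, hl.max hm⟩⟩
    inf := fun x y => ⟨x.1 ⊓ y.1, by
      obtain ⟨l, hl⟩ := x.2; obtain ⟨m, hm⟩ := y.2; exact ⟨l ⊓ m, hl.min hm⟩⟩
    le_sup_left := fun a b => (le_sup_left : a.1 ≤ a.1 ⊔ b.1)
    le_sup_right := fun a b => (le_sup_right : b.1 ≤ a.1 ⊔ b.1)
    sup_le := fun a b c h₁ h₂ => (sup_le h₁ h₂ : a.1 ⊔ b.1 ≤ c.1)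
    inf_le_left := fun a b => (inf_le_left : a.1 ⊓ b.1 ≤ a.1)
    inf_le_right := fun a b => (inf_le_right : a.1 ⊓ b.1 ≤ b.1)
    le_inf := fun a b c h₁ h₂ => (le_inf h₁ h₂ : a.1 ≤ b.1 ⊓ c.1) }

instance : Lattice c0Sub :=
  { (inferInstance : PartialOrder c0Sub) with
    sup := fun x y => ⟨x.1 ⊔ y.1, by
      have := x.2.max y.2
      show Tendsto (fun b => x.1 b ⊔ y.1 b) atTop (nhds 0)
      first | exact this | simpa using this⟩
    inf := fun x y => ⟨x.1 ⊓ y.1, by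
      have := x.2.min y.2
      show Tendsto (fun b => x.1 b ⊓ y.1 b) atTop (nhds 0)
      first | exact this | simpa using this⟩
    le_sup_left := fun a b => (le_sup_left : a.1 ≤ a.1 ⊔ b.1)
    le_sup_right := fun a b => (le_sup_right : b.1 ≤ a.1 ⊔ b.1)
    sup_le := fun a b c h₁ h₂ => (sup_le h₁ h₂ : a.1 ⊔ b.1 ≤ c.1)
    inf_le_left := fun a b => (inf_le_left : a.1 ⊓ b.1 ≤ a.1)
    inf_le_right := fun a b => (inf_le_right : a.1 ⊓ b.1 ≤ b.1)
    le_inf := fun a b c h₁ h₂ => (le_inf h₁ h₂ : a.1 ≤ b.1 ⊓ c.1) }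

instance : Lattice LinfSub :=
  { (inferInstance : PartialOrder LinfSub) with
    sup := fun x y => ⟨x.1 ⊔ y.1, by
      obtain ⟨C, hC⟩ := x.2; obtain ⟨D, hD⟩ := y.2
      exact ⟨C ⊔ D, fun n => by
        have h1 := hC n; have h2 := hD n
        simp only [Pi.sup_apply]
        rcases le_total (x.1 n) (y.1 n) with h | h
        · rw [sup_eq_right.2 h]; exact h2.trans le_sup_right
        · rw [sup_eq_left.2 h]; exact h1.trans le_sup_left⟩⟩
    inf := fun x y => ⟨x.1 ⊓ y.1, by
      obtain ⟨C, hC⟩ := x.2; obtain ⟨D, hD⟩ := y.2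
      exact ⟨C ⊔ D, fun n => by
        have h1 := hC n; have h2 := hD n
        simp only [Pi.inf_apply]
        rcases le_total (x.1 n) (y.1 n) with h | h
        · rw [inf_eq_left.2 h]; exact h1.trans le_sup_left
        · rw [inf_eq_right.2 h]; exact h2.trans le_sup_right⟩⟩
    le_sup_left := fun a b => (le_sup_left : a.1 ≤ a.1 ⊔ b.1)
    le_sup_right := fun a b => (le_sup_right : b.1 ≤ a.1 ⊔ b.1)
    sup_le := fun a b c h₁ h₂ => (sup_le h₁ h₂ : a.1 ⊔ b.1 ≤ c.1)
    inf_le_left := fun a b => (inf_le_left : a.1 ⊓ b.1 ≤ a.1)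
    inf_le_right := fun a b => (inf_le_right : a.1 ⊓ b.1 ≤ b.1)
    le_inf := fun a b c h₁ h₂ => (le_inf h₁ h₂ : a.1 ≤ b.1 ⊓ c.1) }

noncomputable instance : Norm cSub := ⟨fun x => ⨆ n, |x.1 n|⟩
noncomputable instance : Norm c0Sub := ⟨fun x => ⨆ n, |x.1 n|⟩
noncomputable instance : Norm LinfSub := ⟨fun x => ⨆ n, |x.1 n|⟩

section Aux

lemma c0_le_of {a b : c0Sub} (h : ∀ n, a.1 n ≤ b.1 n) : a ≤ b := h

lemma c0_le_apply {a b : c0Sub} (h : a ≤ b) (n : ℕ) : a.1 n ≤ b.1 n := h n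

lemma c0_sub_apply (a b : c0Sub) (n : ℕ) : (a - b).1 n = a.1 n - b.1 n := rfl

lemma c0_abs_apply (a : c0Sub) (n : ℕ) : (|a|).1 n = |a.1 n| := rfl

lemma c0_coord_le_norm (a : c0Sub) (n : ℕ) : |a.1 n| ≤ ‖a‖ := by
  have ht : Tendsto (fun m => |a.1 m|) atTop (nhds 0) := by
    simpa using (a.2 : Tendsto a.1 atTop (nhds 0)).abs
  exact le_ciSup ht.bddAbove_range n

end Aux

/-- for a strictly positive null sequence `β`, the diagonal operator
`T : c₀ → c₀`, `T a = ∑ β k * a k • e k`, is completely quasi Levi but not σ-Levi. -/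
theorem diagonal_c0_c0_cqLevi_not_sigmaLevi (β : ℕ → ℝ)
    (hβpos : ∀ k, 0 < β k) (hβ0 : Tendsto β atTop (nhds 0))
    (T : c0Sub → c0Sub) (hT : ∀ (a : c0Sub) (k : ℕ), (T a).1 k = β k * a.1 k) :
    IsCqLeviMap T ∧ ¬ IsSigmaLeviMap T := by
  constructor
  · -- completely quasi Levi
    intro ι _ _ _ x hmono hbdd
    obtain ⟨C, hC⟩ := hbdd
    obtain ⟨α0⟩ := ‹Nonempty ι›
    have hbd : ∀ n : ℕ, BddAbove (Set.range fun α => (x α).1 n) := by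
      intro n
      refine ⟨C, ?_⟩
      rintro _ ⟨α, rfl⟩
      exact le_trans (le_abs_self _) ((c0_coord_le_norm (x α) n).trans (hC α))
    set s : ℕ → ℝ := fun n => ⨆ α, (x α).1 n with hs
    have hle_s : ∀ α n, (x α).1 n ≤ s n := fun α n => le_ciSup (hbd n) α
    have hsC : ∀ n, |s n| ≤ C := by
      intro n
      rw [abs_le]
      constructor
      · have h1 : -C ≤ (x α0).1 n :=
          neg_le_of_abs_le ((c0_coord_le_norm (x α0) n).trans (hC α0))
        exact h1.trans (hle_s α0 n)
      · exact ciSup_le fun α =>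
          le_trans (le_abs_self _) ((c0_coord_le_norm (x α) n).trans (hC α))
    have hC0 : 0 ≤ C := le_trans (abs_nonneg _) ((c0_coord_le_norm (x α0) 0).trans (hC α0))
    have hy₀mem : Tendsto (fun n => β n * s n) atTop (nhds 0) := by
      refine squeeze_zero_norm (fun n => ?_) (by simpa using hβ0.mul_const C)
      rw [Real.norm_eq_abs, abs_mul, abs_of_nonneg (hβpos n).le]
      exact mul_le_mul_of_nonneg_left (hsC n) (hβpos n).le
    set y₀ : c0Sub := ⟨fun n => β n * s n, hy₀mem⟩ with hy₀def
    have hy₀app : ∀ n, y₀.1 n = β n * s n := fun n => rfl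
    have hTle : ∀ {α α'}, α ≤ α' → ∀ n, (T (x α)).1 n ≤ (T (x α')).1 n := by
      intro α α' h n
      rw [hT, hT]
      exact mul_le_mul_of_nonneg_left (c0_le_apply (hmono h) n) (hβpos n).le
    have hTy₀ : ∀ α n, (T (x α)).1 n ≤ y₀.1 n := by
      intro α n
      rw [hT, hy₀app]
      exact mul_le_mul_of_nonneg_left (hle_s α n) (hβpos n).le
    refine ⟨y₀, Set.range (fun α => y₀ - T (x α)), ⟨_, ⟨α0, rfl⟩⟩, ?_, ?_, ?_⟩
    · -- directed downwards
      rintro _ ⟨α₁, rfl⟩ _ ⟨α₂, rfl⟩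
      obtain ⟨α₃, h₁, h₂⟩ := directed_of (· ≤ ·) α₁ α₂
      refine ⟨y₀ - T (x α₃), ⟨α₃, rfl⟩, ?_, ?_⟩
      · exact c0_le_of fun n => by
          rw [c0_sub_apply, c0_sub_apply]
          exact sub_le_sub_left (hTle h₁ n) _
      · exact c0_le_of fun n => by
          rw [c0_sub_apply, c0_sub_apply]
          exact sub_le_sub_left (hTle h₂ n) _
    · -- IsGLB
      constructor
      · rintro _ ⟨α, rfl⟩
        refine c0_le_of fun n => ?_
        rw [c0_sub_apply]
        have : ((0 : c0Sub)).1 n = 0 := rfl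
        rw [this]
        exact sub_nonneg.2 (hTy₀ α n)
      · intro b hb
        refine c0_le_of fun n => ?_
        show b.1 n ≤ (0:ℝ)
        have key : ∀ α, β n * (x α).1 n ≤ y₀.1 n - b.1 n := by
          intro α
          have h1 := c0_le_apply (hb ⟨α, rfl⟩) n
          rw [c0_sub_apply, hT] at h1
          linarith
        have hsle : s n ≤ (y₀.1 n - b.1 n) / β n := by
          refine ciSup_le fun α => ?_
          rw [le_div_iff₀ (hβpos n)]
          calc (x α).1 n * β n = β n * (x α).1 n := mul_comm _ _
            _ ≤ _ := key α
        have h2 : β n * s n ≤ y₀.1 n - b.1 n := by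
          have := mul_le_mul_of_nonneg_left hsle (hβpos n).le
          rwa [mul_div_cancel₀ _ (hβpos n).ne'] at this
        rw [hy₀app] at h2
        linarith
    · -- eventual domination
      rintro _ ⟨α, rfl⟩
      refine ⟨α, fun α' hαα' => c0_le_of fun n => ?_⟩
      rw [c0_abs_apply, c0_sub_apply, c0_sub_apply]
      rw [abs_of_nonpos (sub_nonpos.2 (hTy₀ α' n)), neg_sub]
      exact sub_le_sub_left (hTle hαα' n) _
  · -- not σ-Levi
    intro hσ
    have hone : ∀ n : ℕ, Tendsto (fun k => if k < n then (1:ℝ) else 0) atTop (nhds 0) := by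
      intro n
      apply tendsto_const_nhds.congr'
      filter_upwards [eventually_ge_atTop n] with k hk
      rw [if_neg (Nat.not_lt.2 hk)]
    set x : ℕ → c0Sub := fun n => ⟨fun k => if k < n then 1 else 0, hone n⟩ with hx
    have hxapp : ∀ n k, (x n).1 k = if k < n then 1 else 0 := fun n k => rfl
    have hxmono : Monotone x := by
      intro n m hnm
      refine c0_le_of fun k => ?_
      rw [hxapp, hxapp]
      split_ifs with h1 h2
      · exact le_refl _
      · exact absurd (lt_of_lt_of_le h1 hnm) h2
      · norm_num
      · exact le_refl _
    have hxb : ∃ C, ∀ n, ‖x n‖ ≤ C := by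
      refine ⟨1, fun n => ?_⟩
      show (⨆ k, |(x n).1 k|) ≤ 1
      refine ciSup_le fun k => ?_
      rw [hxapp]
      split_ifs <;> norm_num
    obtain ⟨x₀, y, hyanti, hyglb, hydom⟩ := hσ x hxmono hxb
    have hy0 : ∀ m k, 0 ≤ (y m).1 k := fun m k => c0_le_apply (hyglb.1 ⟨m, rfl⟩) k
    have hbb : ∀ k : ℕ, BddBelow (Set.range fun m => (y m).1 k) := by
      intro k
      exact ⟨0, by rintro _ ⟨m, rfl⟩; exact hy0 m k⟩
    set g : ℕ → ℝ := fun k => ⨅ m, (y m).1 k with hg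
    have hg0 : ∀ k, 0 ≤ g k := fun k => le_ciInf fun m => hy0 m k
    have hgy : ∀ k m, g k ≤ (y m).1 k := fun k m => ciInf_le (hbb k) m
    have hgmem : Tendsto g atTop (nhds 0) :=
      squeeze_zero hg0 (fun k => hgy k 0) (y 0).2
    have hglb : (⟨g, hgmem⟩ : c0Sub) ≤ 0 :=
      hyglb.2 (by rintro _ ⟨m, rfl⟩; exact c0_le_of fun k => hgy k m)
    have hgeq : ∀ k, g k = 0 := fun k => le_antisymm (c0_le_apply hglb k) (hg0 k)
    have hx₀ : ∀ k, x₀.1 k = 1 := by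
      intro k
      have key : ∀ m, β k * |1 - x₀.1 k| ≤ (y m).1 k := by
        intro m
        obtain ⟨n₀, hn₀⟩ := hydom m
        have h := c0_le_apply (hn₀ (max n₀ (k+1)) (le_max_left _ _)) k
        rw [c0_abs_apply, c0_sub_apply, hT, hT, hxapp,
          if_pos (lt_of_lt_of_le (Nat.lt_succ_self k) (le_max_right _ _))] at h
        calc β k * |1 - x₀.1 k| = |β k * 1 - β k * x₀.1 k| := by
              rw [← mul_sub, abs_mul, abs_of_nonneg (hβpos k).le]
          _ ≤ _ := h
      have h1 : β k * |1 - x₀.1 k| ≤ g k := le_ciInf key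
      rw [hgeq k] at h1
      have h2 : |1 - x₀.1 k| ≤ 0 := by
        by_contra hcon
        push_neg at hcon
        nlinarith [hβpos k]
      have h3 : (1:ℝ) - x₀.1 k = 0 := abs_nonpos_iff.1 h2
      linarith
    have ht : Tendsto (fun _ : ℕ => (1:ℝ)) atTop (nhds 0) :=
      (x₀.2 : Tendsto x₀.1 atTop (nhds 0)).congr hx₀
    exact one_ne_zero (tendsto_nhds_unique tendsto_const_nhds ht)
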